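/- Let p ≡ 1 (mod 8) be prime, √2 ∈ 𝔽_p a square root of 2, and suppose 1+√2 is a square in 𝔽_p. Write p = a² + b² with a odd, b even, a + b ≡ 1 (mod 4). Then 32 divides (a-1)² + b². -/

import Mathlib

private lemma div_isSquare {F : Type*} [Field F] {x y : F} (h0 : x ≠ 0)
    (hx : IsSquare x) (hxy : IsSquare (x * y)) : IsSquare y := by
  obtain ⟨r, hr⟩ := hx
  obtain ⟨t, ht⟩ := hxy
  have hr0 : r ≠ 0 := by rintro rfl; rw [mul_zero] at hr; exact h0 hr
  refine ⟨t / r, ?_⟩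
  field_simp
  linear_combination ht - y * hr

theorem stmt11 (p : ℕ) (hp : p.Prime) (h8 : p % 8 = 1) (s : ZMod p) (hs : s ^ 2 = 2)
    (hsq : IsSquare (1 + s)) (a b : ℤ) (hab : (p : ℤ) = a ^ 2 + b ^ 2)
    (ha : Odd a) (hb : Even b) (habm : (a + b) % 4 = 1) :
    (32 : ℤ) ∣ (a - 1) ^ 2 + b ^ 2 := by
  haveI fp : Fact p.Prime := ⟨hp⟩
  have hp2 : (2:ℕ) ≤ p := hp.two_le
  have hp9 : 9 ≤ p := by omega
  have hp4 : p % 4 = 1 := by omega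
  have hpodd : Odd p := by rw [Nat.odd_iff]; omega
  have hp9' : (9:ℤ) ≤ (p:ℤ) := by exact_mod_cast hp9
  -- basic nonvanishing
  have ha0 : a ≠ 0 := by rintro rfl; rcases ha with ⟨k, hk⟩; omega
  have hb0 : b ≠ 0 := by
    rintro rfl
    have h1 : (p:ℤ) = a ^ 2 := by simpa using hab
    have h2 : p = a.natAbs ^ 2 := by
      have := congrArg Int.natAbs h1
      simpa [Int.natAbs_pow] using this
    rcases hp.eq_one_or_self_of_dvd a.natAbs ⟨a.natAbs, by rw [h2]; ring⟩ with h3 | h3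
    · rw [h3] at h2; simp at h2; omega
    · have := hp.one_lt; nlinarith
  have hcodd : Odd (a + b) := ha.add_even hb
  have hc0 : a + b ≠ 0 := by rcases hcodd with ⟨k, hk⟩; omega
  -- coprimality
  have hcop : IsCoprime a b := by
    rw [Int.isCoprime_iff_gcd_eq_one]
    by_contra hg
    set g := Int.gcd a b with hgdef
    have hd : (g : ℤ) ∣ a := Int.gcd_dvd_left a b
    have hd' : (g : ℤ) ∣ b := Int.gcd_dvd_right a b
    have hdp : ((g:ℤ))^2 ∣ (p:ℤ) := by
      rw [hab]; exact dvd_add (pow_dvd_pow_of_dvd hd 2) (pow_dvd_pow_of_dvd hd' 2)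
    have hdp' : g ^ 2 ∣ p := by exact_mod_cast hdp
    rcases hp.eq_one_or_self_of_dvd _ hdp' with h1 | h1
    · have : g = 1 := by nlinarith
      exact hg this
    · have hgp : g ∣ p := ⟨g, by rw [← h1]; ring⟩
      rcases hp.eq_one_or_self_of_dvd _ hgp with h2 | h2
      · exact hg h2
      · rw [h2] at h1; nlinarith [hp.one_lt]
  -- casts nonzero in ZMod p
  have key_bound : ∀ x : ℤ, x ≠ 0 → x^2 ≤ 2*(p:ℤ) → ((x:ZMod p) ≠ 0) := by
    intro x hx hxb hx0
    rw [ZMod.intCast_zmod_eq_zero_iff_dvd] at hx0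
    have h1 : (p:ℤ) ≤ |x| := Int.le_of_dvd (abs_pos.mpr hx) ((dvd_abs _ _).mpr hx0)
    have h2 : (p:ℤ)^2 ≤ x^2 := by nlinarith [abs_nonneg x, sq_abs x]
    nlinarith
  have haF : ((a:ZMod p) ≠ 0) := key_bound a ha0 (by nlinarith [sq_nonneg b])
  have hbF : ((b:ZMod p) ≠ 0) := key_bound b hb0 (by nlinarith [sq_nonneg a])
  have hcF : (((a+b:ℤ):ZMod p) ≠ 0) := key_bound (a+b) hc0 (by nlinarith [sq_nonneg (a-b)])
  have h2F : ((2:ZMod p) ≠ 0) := by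
    have : (((2:ℤ)):ZMod p) ≠ 0 := by
      rw [Ne, ZMod.intCast_zmod_eq_zero_iff_dvd]
      intro h
      have := Int.le_of_dvd (by norm_num) h
      omega
    simpa using this
  -- field computations
  have hA : ((a:ZMod p))^2 + ((b:ZMod p))^2 = 0 := by
    have h0 : ((a^2+b^2 : ℤ) : ZMod p) = 0 := by
      rw [← hab]; exact_mod_cast ZMod.natCast_self p
    push_cast at h0
    exact h0
  set A := ((a:ℤ) : ZMod p) with hAdef
  set B := ((b:ℤ) : ZMod p) with hBdef
  set j := A * B⁻¹ with hjdef
  have hBi : B * B⁻¹ = 1 := mul_inv_cancel₀ hbF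
  have hj2 : j^2 = -1 := by
    have h1 : j^2 * B^2 = -1 * B^2 := by
      have : j^2 * B^2 = A^2 * (B * B⁻¹)^2 := by rw [hjdef]; ring
      rw [this, hBi]
      linear_combination hA
    exact mul_right_cancel₀ (pow_ne_zero 2 hbF) h1
  have hCj : (1 + j) * B = A + B := by
    rw [hjdef]
    field_simp
    ring
  have h1j : (1:ZMod p) + j ≠ 0 := by
    intro h
    apply hcF
    push_cast
    rw [← hCj, h, zero_mul]
  have h1s : (1:ZMod p) + s ≠ 0 := by
    intro h
    have hs1 : s = -1 := by linear_combination h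
    rw [hs1] at hs
    have h12 : ((1:ℤ) : ZMod p) = ((2:ℤ) : ZMod p) := by push_cast; linear_combination hs
    have := (ZMod.intCast_eq_intCast_iff _ _ _).mp h12
    have := this.dvd
    have h1 : (p:ℤ) ∣ 1 := by simpa using this
    have := Int.le_of_dvd (by norm_num) h1
    omega
  -- the key identity : 4 (1+s)(1+j) = (2 + s(1+j))^2
  have key : (2:ZMod p)^2 * ((1+s)*(1+j)) = (2 + s*(1+j))^2 := by
    linear_combination (-(1+j)^2) * hs + (-2) * hj2
  have hsq4 : IsSquare ((2:ZMod p)^2 * ((1+s)*(1+j))) :=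
    ⟨2 + s*(1+j), by rw [key]; ring⟩
  have hsqj : IsSquare ((1:ZMod p) + j) := by
    refine div_isSquare h1s hsq ?_
    exact div_isSquare (pow_ne_zero 2 h2F) ⟨2, by ring⟩ hsq4
  have hsq2 : IsSquare ((2:ZMod p)) := ⟨s, by rw [← hs]; ring⟩
  -- legendreSym p a = 1 via Jacobi reciprocity
  have hgba : Int.gcd b ((a.natAbs : ℤ)) = 1 := by
    have h1 : Int.gcd b a = 1 := by rw [Int.gcd_comm, ← Int.isCoprime_iff_gcd_eq_one]; exact hcop
    simpa [Int.gcd, Int.natAbs_abs] using h1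
  have hJpα : jacobiSym (p:ℤ) a.natAbs = 1 := by
    have hdvd : ((a.natAbs : ℤ)) ∣ ((b:ℤ)^2 - (p:ℤ)) := by
      have h1 : ((a.natAbs:ℤ)) ∣ a := Int.natAbs_dvd.mpr dvd_rfl
      have h2 : (b:ℤ)^2 - (p:ℤ) = -(a*a) := by rw [hab]; ring
      rw [h2]
      exact dvd_neg.mpr (h1.mul_right a)
    have hmod : (p:ℤ) % (a.natAbs:ℤ) = (b^2) % (a.natAbs:ℤ) :=
      (Int.modEq_iff_dvd.mpr hdvd)
    rw [jacobiSym.mod_left' hmod]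
    exact jacobiSym.sq_one' hgba
  have hαodd : Odd a.natAbs := Int.natAbs_odd.mpr ha
  have hχ4 : ZMod.χ₄ (p : ZMod 4) = 1 := by
    rw [ZMod.χ₄_nat_eq_if_mod_four]
    simp only [show p % 2 = 1 by omega, hp4]
    norm_num
  have hla : legendreSym p a = 1 := by
    rw [jacobiSym.legendreSym.to_jacobiSym]
    rcases Int.natAbs_eq a with h | h
    · rw [h, jacobiSym.quadratic_reciprocity_one_mod_four' hαodd hp4]
      exact hJpα
    · rw [h, show (-(a.natAbs:ℤ)) = -1 * (a.natAbs:ℤ) by ring, jacobiSym.mul_left,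
        jacobiSym.at_neg_one hpodd, hχ4,
        jacobiSym.quadratic_reciprocity_one_mod_four' hαodd hp4, hJpα]
      norm_num
  have hsqA : IsSquare A := (legendreSym.eq_one_iff p haF).mp hla
  -- IsSquare B
  have hC2 : ((2:ZMod p))*(A*B) = (A+B)*(A+B) := by linear_combination -hA
  have hsqAB : IsSquare (A*B) := div_isSquare h2F hsq2 ⟨A+B, hC2⟩
  have hsqB : IsSquare B := div_isSquare haF hsqA hsqAB
  have hsqC : IsSquare (((a+b:ℤ)) : ZMod p) := by
    have : (((a+b:ℤ)) : ZMod p) = (1+j)*B := by rw [hCj]; push_cast; rfl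
    rw [this]
    exact hsqj.mul hsqB
  have hlc : legendreSym p (a+b) = 1 := (legendreSym.eq_one_iff p hcF).mpr hsqC
  -- Jacobi computation for a+b
  set γ := (a+b).natAbs with hγdef
  have hγodd : Odd γ := Int.natAbs_odd.mpr hcodd
  have hgbγ : Int.gcd b ((γ:ℤ)) = 1 := by
    have h1 : IsCoprime b (a + b) := by
      have := (hcop.symm).add_mul_left_right 1
      simpa using this
    have h2 : Int.gcd b (a+b) = 1 := by rw [← Int.isCoprime_iff_gcd_eq_one]; exact h1
    simpa [Int.gcd, Int.natAbs_abs] using h2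
  have hJ2 : jacobiSym (p:ℤ) γ = ZMod.χ₈ (γ : ZMod 8) := by
    have hdvd : ((γ:ℤ)) ∣ (2*(b:ℤ)^2 - (p:ℤ)) := by
      have h1 : ((γ:ℤ)) ∣ (a+b) := Int.natAbs_dvd.mpr dvd_rfl
      have h2 : 2*(b:ℤ)^2 - (p:ℤ) = (b-a)*(a+b) := by rw [hab]; ring
      rw [h2]
      exact h1.mul_left (b-a)
    have hmod : (p:ℤ) % (γ:ℤ) = (2*b^2) % (γ:ℤ) := (Int.modEq_iff_dvd.mpr hdvd)
    rw [jacobiSym.mod_left' hmod, jacobiSym.mul_left, jacobiSym.sq_one' hgbγ, mul_one,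
      jacobiSym.at_two hγodd]
  have hJγp : jacobiSym ((γ:ℤ)) p = 1 := by
    rw [← hlc, jacobiSym.legendreSym.to_jacobiSym]
    rcases Int.natAbs_eq (a+b) with h | h
    · rw [h]
    · rw [h, show (-(γ:ℤ)) = -1 * (γ:ℤ) by ring, jacobiSym.mul_left,
        jacobiSym.at_neg_one hpodd, hχ4]
      norm_num
  have hχ8 : ZMod.χ₈ (γ : ZMod 8) = 1 := by
    rw [← hJ2, ← jacobiSym.quadratic_reciprocity_one_mod_four' hγodd hp4]
    exact hJγp
  have hγ8 : γ % 8 = 1 ∨ γ % 8 = 7 := by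
    rw [ZMod.χ₈_nat_eq_if_mod_eight] at hχ8
    split_ifs at hχ8
    all_goals try assumption
    all_goals norm_num at hχ8
  have h8c : (a + b) % 8 = 1 := by
    have := Int.natAbs_eq (a+b)
    omega
  -- final arithmetic: 4 ∣ b, then conclude
  obtain ⟨k, hk⟩ := ha
  obtain ⟨v, hv⟩ := hb
  obtain ⟨m, hm⟩ := Int.even_mul_succ_self k
  have haa : a^2 = 8*m + 1 := by rw [hk]; linear_combination 4*hm
  have hbb : b^2 = 4*(v*v) := by rw [hv]; ring
  have hv2 : Even v := by
    rcases Int.even_or_odd v with h | h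
    · exact h
    · exfalso
      obtain ⟨w, hw⟩ := h
      have hbw : b^2 = 16*(w*w) + 16*w + 4 := by rw [hbb, hw]; ring
      have hq := hab
      rw [haa, hbw] at hq
      have hzp : ((p:ℕ):ℤ) % 8 = 1 := by omega
      generalize (w*w : ℤ) = W at hq
      omega
  obtain ⟨w, hw⟩ := hv2
  have hb4 : b = 4*w := by omega
  have h8d : (8:ℤ) ∣ (a + b - 1) := by omega
  obtain ⟨t, ht⟩ := h8d
  refine ⟨2*t^2 - 2*t*w + w^2, ?_⟩
  have hA' : a = 8*t - 4*w + 1 := by omega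
  rw [hA', hb4]; ring
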